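/- Every triangulation T of a set S of n ≥ 3 points in general position in the plane has outerplanar index at most n/3 + 1; that is, T has at most n/3 + 1 nonempty cactus layers. -/

import Mathlib

open scoped Classical

noncomputable section

/-- The plane. -/
abbrev Pt : Type := EuclideanSpace ℝ (Fin 2)

/-- The closed segment corresponding to an unordered pair of points. -/
def segOf : Sym2 Pt → Set Pt :=
  Sym2.lift ⟨fun p q => segment ℝ p q, fun p q => segment_symm ℝ p q⟩

/-- The union of all segments of an edge set. -/
def graphUnion (E : Set (Sym2 Pt)) : Set Pt := ⋃ e ∈ E, segOf e

/-- A plane straight-line graph on the point set `S`: edges are nondegenerate segments with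
endpoints in `S`, and any two distinct segments intersect in at most a common endpoint. -/
def IsPlaneGraph (S : Set Pt) (E : Set (Sym2 Pt)) : Prop :=
  (∀ e ∈ E, ¬ e.IsDiag) ∧
  (∀ e ∈ E, ∀ p ∈ e, p ∈ S) ∧
  (∀ e ∈ E, ∀ f ∈ E, e ≠ f → segOf e ∩ segOf f ⊆ {p | p ∈ e ∧ p ∈ f})

/-- A triangulation of `S`: a maximal plane straight-line graph on `S`. -/
def IsTriangulation (S : Set Pt) (E : Set (Sym2 Pt)) : Prop :=
  IsPlaneGraph S E ∧
  ∀ p ∈ S, ∀ q ∈ S, p ≠ q → IsPlaneGraph S (insert s(p, q) E) → s(p, q) ∈ E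

/-- General position: no three distinct points of `S` are collinear. -/
def GenPos (S : Set Pt) : Prop :=
  ∀ p ∈ S, ∀ q ∈ S, ∀ r ∈ S, p ≠ q → p ≠ r → q ≠ r →
    ¬ Collinear ℝ ({p, q, r} : Set Pt)

/-- The unbounded face of a plane set `U`: the union of the unbounded connected components
of the complement of `U`. -/
def outerFace (U : Set Pt) : Set Pt :=
  {x | x ∉ U ∧ ¬ Bornology.IsBounded (connectedComponentIn Uᶜ x)}

/-- The vertices of the plane graph `(S, E)` incident to the unbounded face. -/
def outerVerts (S : Set Pt) (E : Set (Sym2 Pt)) : Set Pt :=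
  {v ∈ S | v ∈ closure (outerFace (graphUnion E))}

/-- The edges of the plane graph `(S, E)` incident to the unbounded face. -/
def outerEdges (S : Set Pt) (E : Set (Sym2 Pt)) : Set (Sym2 Pt) :=
  {e ∈ E | segOf e ⊆ closure (outerFace (graphUnion E))}

/-- Remove the outermost (cactus) layer: delete the vertices incident to the unbounded face
together with all edges incident to them. -/
def peel : Set Pt × Set (Sym2 Pt) → Set Pt × Set (Sym2 Pt) :=
  fun G => (G.1 \ outerVerts G.1 G.2, {e ∈ G.2 | ∀ p ∈ e, p ∉ outerVerts G.1 G.2})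

/-- The vertices of the `i`-th cactus layer (`i ≥ 1`). -/
def layerVerts (S : Set Pt) (E : Set (Sym2 Pt)) (i : ℕ) : Set Pt :=
  outerVerts (peel^[i - 1] (S, E)).1 (peel^[i - 1] (S, E)).2

/-- The edges of the `i`-th cactus layer (`i ≥ 1`). -/
def layerEdges (S : Set Pt) (E : Set (Sym2 Pt)) (i : ℕ) : Set (Sym2 Pt) :=
  outerEdges (peel^[i - 1] (S, E)).1 (peel^[i - 1] (S, E)).2

/-- The layer index of a vertex: the (first) layer containing it. -/
def lind (S : Set Pt) (E : Set (Sym2 Pt)) (v : Pt) : ℕ :=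
  sInf {i | 1 ≤ i ∧ v ∈ layerVerts S E i}

/-- The outerplanar index: the number of nonempty cactus layers. -/
def outerplanarIndex (S : Set Pt) (E : Set (Sym2 Pt)) : ℕ :=
  {i : ℕ | 1 ≤ i ∧ (layerVerts S E i).Nonempty}.ncard

/-- Adjacency in the plane graph with edge set `E`. -/
def Adj (E : Set (Sym2 Pt)) (p q : Pt) : Prop := p ≠ q ∧ s(p, q) ∈ E

/-- The abstract simple graph underlying the edge set `E`. -/
def graphOf (E : Set (Sym2 Pt)) : SimpleGraph Pt where
  Adj p q := p ≠ q ∧ s(p, q) ∈ E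
  symm := by
    constructor
    intro p q h
    exact ⟨h.1.symm, by rw [Sym2.eq_swap]; exact h.2⟩
  loopless := ⟨fun p h => h.1 rfl⟩

end

open Set

lemma graphUnion_subset_convexHull {S' : Set Pt} {E' : Set (Sym2 Pt)}
    (hE : ∀ e ∈ E', ∀ p ∈ e, p ∈ S') : graphUnion E' ⊆ convexHull ℝ S' := by
  intro x hx
  simp only [graphUnion, Set.mem_iUnion, exists_prop] at hx
  obtain ⟨e, he, hxe⟩ := hx
  revert he hxe
  induction e using Sym2.ind with
  | _ p q =>
    intro he hxe
    have hp : p ∈ S' := hE _ he p (by simp)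
    have hq : q ∈ S' := hE _ he q (by simp)
    have hs : segOf s(p, q) = segment ℝ p q := rfl
    rw [hs] at hxe
    exact (convex_convexHull ℝ S').segment_subset (subset_convexHull ℝ S' hp)
      (subset_convexHull ℝ S' hq) hxe

lemma exposed_mem_outerVerts {S' : Set Pt} {E' : Set (Sym2 Pt)}
    (hE : ∀ e ∈ E', ∀ p ∈ e, p ∈ S') {v : Pt} (hv : v ∈ S')
    (f : Pt →L[ℝ] ℝ) (g : Pt) (hg : 0 < f g)
    (hmax : ∀ w ∈ S', f w ≤ f v) : v ∈ outerVerts S' E' := by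
  refine ⟨hv, ?_⟩
  set U := graphUnion E' with hUdef
  have hU : ∀ x ∈ U, f x ≤ f v := by
    intro x hx
    have h1 : convexHull ℝ S' ⊆ {z | f z ≤ f v} :=
      convexHull_min hmax (convex_halfSpace_le ⟨f.map_add, f.map_smul⟩ (f v))
    exact h1 (graphUnion_subset_convexHull hE hx)
  rw [Metric.mem_closure_iff]
  intro ε hε
  have hgne : g ≠ 0 := by rintro rfl; simp at hg
  have hgnorm : 0 < ‖g‖ := norm_pos_iff.mpr hgne
  set t : ℝ := ε / (2 * ‖g‖) with ht
  have htpos : 0 < t := by positivity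
  have hfy : f v < f (v + t • g) := by
    have : f (v + t • g) = f v + t * f g := by simp
    rw [this]
    nlinarith
  have hyU : v + t • g ∉ U := fun h => absurd (hU _ h) (not_le.mpr hfy)
  refine ⟨v + t • g, ⟨hyU, ?_⟩, ?_⟩
  · -- unbounded component
    set H : Set Pt := {z | f v < f z} with hH
    have hHU : H ⊆ Uᶜ := fun z hz hzU => absurd (hU z hzU) (not_le.mpr hz)
    have hsub : H ⊆ connectedComponentIn Uᶜ (v + t • g) :=
      ((convex_halfSpace_gt ⟨f.map_add, f.map_smul⟩ (f v)).isPreconnected).subset_connectedComponentIn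
        hfy hHU
    intro hb
    obtain ⟨C, hC⟩ := isBounded_iff_forall_norm_le.mp (hb.subset hsub)
    set s : ℝ := max ((C + ‖v‖ + 1) / ‖g‖) 1 with hs
    have hspos : (0:ℝ) < s := lt_of_lt_of_le one_pos (le_max_right _ _)
    have hzH : v + s • g ∈ H := by
      have : f (v + s • g) = f v + s * f g := by simp
      simp only [hH, Set.mem_setOf_eq, this]
      nlinarith
    have hle := hC _ hzH
    have h1 : s * ‖g‖ ≤ ‖v + s • g‖ + ‖v‖ := by
      have : s • g = (v + s • g) - v := by abel
      calc s * ‖g‖ = ‖s • g‖ := by rw [norm_smul, Real.norm_of_nonneg hspos.le]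
        _ = ‖(v + s • g) - v‖ := by rw [← this]
        _ ≤ ‖v + s • g‖ + ‖v‖ := norm_sub_le _ _
    have h2 : (C + ‖v‖ + 1) / ‖g‖ ≤ s := le_max_left _ _
    have h3 : C + ‖v‖ + 1 ≤ s * ‖g‖ := by
      rw [div_le_iff₀ hgnorm] at h2; linarith
    linarith
  · have : dist v (v + t • g) = t * ‖g‖ := by
      rw [dist_eq_norm]
      have : v - (v + t • g) = -(t • g) := by abel
      rw [this, norm_neg, norm_smul, Real.norm_of_nonneg htpos.le]
    rw [this]
    have heq : t * ‖g‖ = ε / 2 := by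
      rw [ht]; field_simp
    rw [heq]; linarith

lemma extreme_mem_outerVerts {S' : Set Pt} {E' : Set (Sym2 Pt)} (hfin : S'.Finite)
    (hE : ∀ e ∈ E', ∀ p ∈ e, p ∈ S') {v : Pt}
    (hv : v ∈ (convexHull ℝ S').extremePoints ℝ) : v ∈ outerVerts S' E' := by
  have hvS : v ∈ S' := extremePoints_convexHull_subset hv
  have hvd : v ∉ convexHull ℝ (S' \ {v}) := by
    have h2 := ((convex_convexHull ℝ S').mem_extremePoints_iff_mem_diff_convexHull_diff).mp hv
    intro hc
    exact h2.2 (convexHull_mono (show S' \ {v} ⊆ (convexHull ℝ S') \ {v} from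
      fun w hw => ⟨subset_convexHull ℝ S' hw.1, hw.2⟩) hc)
  rcases Set.eq_empty_or_nonempty (S' \ {v}) with h | ⟨a, ha⟩
  · -- S' = {v}
    have hS : ∀ w ∈ S', w = v := by
      intro w hw
      by_contra hne
      have hmem : w ∈ S' \ {v} := ⟨hw, hne⟩
      rw [h] at hmem
      exact hmem
    set g : Pt := EuclideanSpace.single 0 (1:ℝ) with hgdef
    have hgne : g ≠ 0 := by
      intro h0
      have : g 0 = 0 := by rw [h0]; rfl
      simp [hgdef, EuclideanSpace.single_apply] at this
    refine exposed_mem_outerVerts hE hvS (innerSL ℝ g) g ?_ ?_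
    · show (0:ℝ) < inner ℝ g g
      rw [real_inner_self_eq_norm_sq]
      exact pow_pos (norm_pos_iff.mpr hgne) 2
    · intro w hw; rw [hS w hw]
  · have hconv : Convex ℝ (convexHull ℝ (S' \ {v})) := convex_convexHull _ _
    have hclosed : IsClosed (convexHull ℝ (S' \ {v})) :=
      ((hfin.subset diff_subset).isCompact_convexHull ℝ).isClosed
    obtain ⟨f, u, hfu, huv⟩ := geometric_hahn_banach_closed_point hconv hclosed hvd
    have hmax : ∀ w ∈ S', f w ≤ f v := by
      intro w hw
      by_cases hwv : w = v
      · simp [hwv]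
      · exact le_of_lt ((hfu w (subset_convexHull _ _ ⟨hw, hwv⟩)).trans huv)
    have hfa : f a < f v := (hfu a (subset_convexHull _ _ ha)).trans huv
    refine exposed_mem_outerVerts hE hvS f (v - a) ?_ hmax
    simpa [map_sub] using sub_pos.mpr hfa

lemma outer_nonempty {S' : Set Pt} {E' : Set (Sym2 Pt)} (hfin : S'.Finite)
    (hE : ∀ e ∈ E', ∀ p ∈ e, p ∈ S') (hne : S'.Nonempty) :
    (outerVerts S' E').Nonempty := by
  obtain ⟨x, hx⟩ := hne
  obtain ⟨v, hv⟩ := (hfin.isCompact_convexHull ℝ).extremePoints_nonempty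
    ⟨x, subset_convexHull ℝ S' hx⟩
  exact ⟨v, extreme_mem_outerVerts hfin hE hv⟩

lemma collinear_of_ncard_le_two {A : Set Pt} (hfe : A.Finite) (h2 : A.ncard ≤ 2) :
    Collinear ℝ A := by
  obtain h0 | h1 | h2' : A.ncard = 0 ∨ A.ncard = 1 ∨ A.ncard = 2 := by omega
  · rw [Set.ncard_eq_zero hfe] at h0; rw [h0]; exact collinear_empty ℝ _
  · obtain ⟨a, rfl⟩ := Set.ncard_eq_one.mp h1; exact collinear_singleton ℝ a
  · obtain ⟨a, b, _, rfl⟩ := Set.ncard_eq_two.mp h2'; exact collinear_pair ℝ a b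

lemma three_le_extremePoints {A : Set Pt} (hfe : A.Finite) (hcol : ¬ Collinear ℝ A) :
    3 ≤ ((convexHull ℝ A).extremePoints ℝ).ncard := by
  set Ex := (convexHull ℝ A).extremePoints ℝ with hEx
  have hExS : Ex ⊆ A := extremePoints_convexHull_subset
  by_contra hlt
  push_neg at hlt
  have hExcol : Collinear ℝ Ex := collinear_of_ncard_le_two (hfe.subset hExS) (by omega)
  have hKM : convexHull ℝ Ex = convexHull ℝ A := by
    have h := closure_convexHull_extremePoints (hfe.isCompact_convexHull ℝ) (convex_convexHull ℝ A)
    rw [IsClosed.closure_eq (((hfe.subset hExS).isCompact_convexHull ℝ).isClosed)] at h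
    exact h
  apply hcol
  have hcc : Collinear ℝ (convexHull ℝ Ex) := by
    show Module.rank ℝ (vectorSpan ℝ ((convexHull ℝ) Ex)) ≤ 1
    rw [← direction_affineSpan, affineSpan_convexHull, direction_affineSpan]
    exact hExcol
  exact hcc.subset (by rw [hKM]; exact subset_convexHull ℝ A)

lemma mem_outerVerts_singleton {S' : Set Pt} {E' : Set (Sym2 Pt)}
    (hE : ∀ e ∈ E', ∀ p ∈ e, p ∈ S') {w : Pt} (hw : w ∈ S')
    (hS : ∀ z ∈ S', z = w) : w ∈ outerVerts S' E' := by
  set g : Pt := EuclideanSpace.single 0 (1:ℝ) with hgdef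
  have hgne : g ≠ 0 := by
    intro h0
    have : g 0 = 0 := by rw [h0]; rfl
    simp [hgdef, EuclideanSpace.single_apply] at this
  refine exposed_mem_outerVerts hE hw (innerSL ℝ g) g ?_ ?_
  · show (0:ℝ) < inner ℝ g g
    rw [real_inner_self_eq_norm_sq]
    exact pow_pos (norm_pos_iff.mpr hgne) 2
  · intro z hz; rw [hS z hz]

lemma mem_outerVerts_pair {S' : Set Pt} {E' : Set (Sym2 Pt)}
    (hE : ∀ e ∈ E', ∀ p ∈ e, p ∈ S') {w p : Pt} (hw : w ∈ S') (hpw : p ≠ w)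
    (hS : ∀ z ∈ S', z = w ∨ z = p) : w ∈ outerVerts S' E' := by
  refine exposed_mem_outerVerts hE hw (innerSL ℝ (w - p)) (w - p) ?_ ?_
  · show (0:ℝ) < inner ℝ (w - p) (w - p)
    rw [real_inner_self_eq_norm_sq]
    exact pow_pos (norm_pos_iff.mpr (sub_ne_zero.mpr (Ne.symm hpw))) 2
  · intro z hz
    rcases hS z hz with rfl | rfl
    · exact le_refl _
    · show (inner ℝ (w - z) z : ℝ) ≤ inner ℝ (w - z) w
      have h1 : (inner ℝ (w - z) w : ℝ) - inner ℝ (w - z) z = inner ℝ (w - z) (w - z) := by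
        rw [← inner_sub_right]
      have h2 : (0:ℝ) ≤ inner ℝ (w - z) (w - z) := real_inner_self_nonneg
      linarith

lemma outer_card_three {S : Set Pt} (hgp : GenPos S) {S' : Set Pt} {E' : Set (Sym2 Pt)}
    (hfin : S'.Finite) (hsub : S' ⊆ S)
    (hE : ∀ e ∈ E', ∀ p ∈ e, p ∈ S')
    (h : (S' \ outerVerts S' E').Nonempty) : 3 ≤ (outerVerts S' E').ncard := by
  obtain ⟨w, hwS, hwout⟩ := h
  by_cases hcol : Collinear ℝ S'
  · exfalso
    apply hwout
    by_cases hbig : ∃ p ∈ S' \ {w}, ∃ q ∈ S' \ {w}, p ≠ q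
    · exfalso
      obtain ⟨p, hp, q, hq, hpq⟩ := hbig
      have hpw : p ≠ w := fun h => hp.2 (by simp [h])
      have hqw : q ≠ w := fun h => hq.2 (by simp [h])
      refine hgp w (hsub hwS) p (hsub hp.1) q (hsub hq.1) (Ne.symm hpw) (Ne.symm hqw) hpq ?_
      refine hcol.subset ?_
      exact Set.insert_subset hwS (Set.insert_subset hp.1 (Set.singleton_subset_iff.mpr hq.1))
    · push_neg at hbig
      rcases Set.eq_empty_or_nonempty (S' \ {w}) with h0 | ⟨p, hp⟩
      · refine mem_outerVerts_singleton hE hwS ?_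
        intro z hz
        by_contra hne
        have : z ∈ S' \ {w} := ⟨hz, by simpa using hne⟩
        rw [h0] at this
        exact this
      · have hpw : p ≠ w := fun h => hp.2 (by simp [h])
        refine mem_outerVerts_pair hE hwS hpw ?_
        intro z hz
        by_cases hzw : z = w
        · exact Or.inl hzw
        · exact Or.inr (hbig z ⟨hz, by simpa using hzw⟩ p hp)
  · have h3 := three_le_extremePoints hfin hcol
    have hsub2 : (convexHull ℝ S').extremePoints ℝ ⊆ outerVerts S' E' :=
      fun v hv => extreme_mem_outerVerts hfin hE hv
    exact h3.trans (Set.ncard_le_ncard hsub2 (hfin.subset (Set.sep_subset _ _)))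

lemma peel_inv (S : Set Pt) (E : Set (Sym2 Pt)) (hPG : ∀ e ∈ E, ∀ p ∈ e, p ∈ S) (i : ℕ) :
    (∀ e ∈ (peel^[i] (S,E)).2, ∀ p ∈ e, p ∈ (peel^[i] (S,E)).1) ∧ (peel^[i] (S,E)).1 ⊆ S := by
  induction i with
  | zero => exact ⟨hPG, subset_rfl⟩
  | succ n ih =>
    rw [Function.iterate_succ_apply']
    refine ⟨?_, ?_⟩
    · rintro e ⟨heE, hout⟩ p hp
      exact ⟨ih.1 e heE p hp, hout p hp⟩
    · exact Set.diff_subset.trans ih.2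

lemma peel_mono (S : Set Pt) (E : Set (Sym2 Pt)) (i j : ℕ) (hij : i ≤ j) :
    (peel^[j] (S,E)).1 ⊆ (peel^[i] (S,E)).1 := by
  induction j, hij using Nat.le_induction with
  | base => exact subset_rfl
  | succ n hn ih =>
    rw [Function.iterate_succ_apply']
    exact Set.diff_subset.trans ih

/-- a triangulation of `n ≥ 3` points has at most `n/3 + 1` nonempty layers. -/
theorem outerplanarIndex_le_third
    (S : Set Pt) (hfin : S.Finite) (hn : 3 ≤ S.ncard) (hgp : GenPos S)
    (E : Set (Sym2 Pt)) (hT : IsTriangulation S E) :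
    (outerplanarIndex S E : ℝ) ≤ (S.ncard : ℝ) / 3 + 1 := by
  classical
  have hPG : ∀ e ∈ E, ∀ p ∈ e, p ∈ S := hT.1.2.1
  set P : ℕ → Set Pt × Set (Sym2 Pt) := fun i => peel^[i] (S, E) with hP
  have hinv := fun i => peel_inv S E hPG i
  set L : ℕ → Set Pt := fun i => layerVerts S E i with hLdef
  have hL : ∀ i, L (i + 1) = outerVerts (P i).1 (P i).2 := fun i => rfl
  have hLP : ∀ i, L (i + 1) ⊆ (P i).1 := fun i => by
    rw [hL]; exact Set.sep_subset _ _
  have hLS : ∀ i, L (i + 1) ⊆ S := fun i => (hLP i).trans (hinv i).2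
  have hLfin : ∀ i, (L (i + 1)).Finite := fun i => hfin.subset (hLS i)
  have key_ne : ∀ i, (P i).1.Nonempty → (L (i + 1)).Nonempty := by
    intro i h
    rw [hL]
    exact outer_nonempty (hfin.subset (hinv i).2) (hinv i).1 h
  have hPsucc : ∀ i, (P (i + 1)).1 = (P i).1 \ L (i + 1) := by
    intro i
    simp only [hP, hL]
    rw [Function.iterate_succ_apply']
    rfl
  have hdisj : ∀ i j, i < j → Disjoint (L (i + 1)) (L (j + 1)) := by
    intro i j hij
    rw [Set.disjoint_left]
    intro v hvi hvj
    have h1 : v ∈ (P j).1 := hLP j hvj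
    have h2 : (P j).1 ⊆ (P (i + 1)).1 := peel_mono S E (i + 1) j hij
    have h3 := h2 h1
    rw [hPsucc i] at h3
    exact h3.2 hvi
  have hempty : ∀ i j, i ≤ j → (P i).1 = ∅ → (P j).1 = ∅ := fun i j hij h =>
    Set.subset_empty_iff.mp (h ▸ peel_mono S E i j hij)
  have hdc : ∀ i j, i ≤ j → (L (j + 1)).Nonempty → (L (i + 1)).Nonempty := by
    intro i j hij hj
    by_contra hi
    have hPi : (P i).1 = ∅ := by
      by_contra h
      exact hi (key_ne i (Set.nonempty_iff_ne_empty.mpr h))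
    have hPj : (P j).1 = ∅ := hempty i j hij hPi
    obtain ⟨v, hv⟩ := hj
    have hv2 := hLP j hv
    rw [hPj] at hv2
    exact hv2
  set M : Set ℕ := {i : ℕ | 1 ≤ i ∧ (layerVerts S E i).Nonempty} with hM
  have hsum : ∀ m : ℕ, ∑ j ∈ Finset.range m, (L (j + 1)).ncard ≤ S.ncard := by
    intro m
    set FL : ℕ → Finset Pt := fun j => (hLfin j).toFinset with hFL
    have hdisjF : ∀ i ∈ Finset.range m, ∀ j ∈ Finset.range m, i ≠ j → Disjoint (FL i) (FL j) := by
      intro i _ j _ hij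
      rw [hFL]
      simp only []
      rw [Set.Finite.disjoint_toFinset]
      rcases hij.lt_or_gt with h | h
      · exact hdisj i j h
      · exact (hdisj j i h).symm
    have hcard : ((Finset.range m).biUnion FL).card = ∑ j ∈ Finset.range m, (FL j).card :=
      Finset.card_biUnion hdisjF
    have hsubF : (Finset.range m).biUnion FL ⊆ hfin.toFinset := by
      intro x hx
      simp only [Finset.mem_biUnion] at hx
      obtain ⟨j, _, hj⟩ := hx
      rw [Set.Finite.mem_toFinset] at hj ⊢
      exact hLS j hj
    calc ∑ j ∈ Finset.range m, (L (j + 1)).ncard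
        = ∑ j ∈ Finset.range m, (FL j).card := by
          refine Finset.sum_congr rfl fun j _ => ?_
          exact Set.ncard_eq_toFinset_card _ (hLfin j)
      _ = ((Finset.range m).biUnion FL).card := hcard.symm
      _ ≤ hfin.toFinset.card := Finset.card_le_card hsubF
      _ = S.ncard := (Set.ncard_eq_toFinset_card _ hfin).symm
  have hSne : S.Nonempty := by
    rw [← Set.ncard_pos hfin]; omega
  have h1mem : (1 : ℕ) ∈ M := by
    refine ⟨le_refl 1, ?_⟩
    have := key_ne 0 hSne
    exact this
  have hMb : ∀ i ∈ M, i ≤ S.ncard := by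
    rintro i ⟨hi1, hine⟩
    obtain ⟨k, rfl⟩ : ∃ k, i = k + 1 := ⟨i - 1, (Nat.succ_pred_eq_of_pos hi1).symm⟩
    have h1 : ∀ j ∈ Finset.range (k + 1), 1 ≤ (L (j + 1)).ncard := by
      intro j hj
      have hne : (L (j + 1)).Nonempty :=
        hdc j k (Nat.lt_succ_iff.mp (Finset.mem_range.mp hj)) hine
      exact (Set.ncard_pos (hLfin j)).mpr hne
    calc k + 1 = ∑ _j ∈ Finset.range (k + 1), 1 := by simp
      _ ≤ ∑ j ∈ Finset.range (k + 1), (L (j + 1)).ncard := Finset.sum_le_sum h1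
      _ ≤ S.ncard := hsum (k + 1)
  have hMfin : M.Finite := (Set.finite_Icc 1 S.ncard).subset (fun i hi => ⟨hi.1, hMb i hi⟩)
  have hMne : M.Nonempty := ⟨1, h1mem⟩
  set m := sSup M with hm
  have hmM : m ∈ M := hMne.csSup_mem hMfin
  have hmub : ∀ i ∈ M, i ≤ m := fun i hi => le_csSup hMfin.bddAbove hi
  obtain ⟨l, hl⟩ : ∃ l, m = l + 1 := ⟨m - 1, (Nat.succ_pred_eq_of_pos hmM.1).symm⟩
  have hLm : (L (l + 1)).Nonempty := by
    have := hmM.2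
    rwa [hl] at this
  have hMeq : M = Set.Icc 1 m := by
    ext i
    constructor
    · intro hi; exact ⟨hi.1, hmub i hi⟩
    · rintro ⟨h1i, him⟩
      obtain ⟨k, rfl⟩ : ∃ k, i = k + 1 := ⟨i - 1, (Nat.succ_pred_eq_of_pos h1i).symm⟩
      exact ⟨h1i, hdc k l (by omega) hLm⟩
  have hcount : outerplanarIndex S E = m := by
    show M.ncard = m
    rw [hMeq, ← Finset.coe_Icc, Set.ncard_coe_finset, Nat.card_Icc]
    omega
  have h3 : ∀ j, j < l → 3 ≤ (L (j + 1)).ncard := by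
    intro j hj
    rw [hL]
    refine outer_card_three hgp (hfin.subset (hinv j).2) (hinv j).2 (hinv j).1 ?_
    have h1 : (P l).1.Nonempty := hLm.mono (hLP l)
    have h2 : (P l).1 ⊆ (P (j + 1)).1 := peel_mono S E (j + 1) l hj
    have h3' := h1.mono h2
    rw [hPsucc j, hL j] at h3'
    exact h3'
  have htot : 3 * l + 1 ≤ S.ncard := by
    have hs := hsum (l + 1)
    rw [Finset.sum_range_succ] at hs
    have hlast : 1 ≤ (L (l + 1)).ncard := (Set.ncard_pos (hLfin l)).mpr hLm
    have hlow : 3 * l ≤ ∑ j ∈ Finset.range l, (L (j + 1)).ncard := by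
      calc 3 * l = ∑ _j ∈ Finset.range l, 3 := by simp [mul_comm]
        _ ≤ _ := Finset.sum_le_sum (fun j hj => h3 j (Finset.mem_range.mp hj))
    omega
  rw [hcount, hl]
  push_cast
  have hreal : (3 : ℝ) * l + 1 ≤ (S.ncard : ℝ) := by exact_mod_cast htot
  linarith
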